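/- Let X be a proper metric space with basepoint x₀, let g be a bounded Lipschitz–Higson function on X, and let (R_k) be a sequence of positive reals with R_k → ∞. Define f_k := (1 − e_{R_k})·g, where e_R(x) = max{0, 1 − d(x, B_R(x₀))/R}. Then the sequence (f_k) is very Lipschitz: for every L > 0 there exists k₀ such that f_k is L-Lipschitz for all k ≥ k₀. -/

import Mathlib

/-- The cutoff function `e_R(x) = max {0, 1 - d(x, B_R(x₀))/R}`. -/
noncomputable def cutoffE {X : Type*} [MetricSpace X] (x₀ : X) (R : ℝ) (x : X) : ℝ :=
  max 0 (1 - Metric.infDist x (Metric.ball x₀ R) / R)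

/-- `f` is a Lipschitz–Higson function: for every `L > 0` there is a compact set
off which `f` is `L`-Lipschitz. -/
def IsLipHigson {X : Type*} [MetricSpace X] (f : X → ℝ) : Prop :=
  ∀ L > (0 : ℝ), ∃ A : Set X, IsCompact A ∧
    ∀ x y : X, x ∉ A → y ∉ A → |f x - f y| ≤ L * dist x y

lemma cutoffE_nonneg {X : Type*} [MetricSpace X] (x₀ : X) (R : ℝ) (x : X) :
    0 ≤ cutoffE x₀ R x := le_max_left _ _

lemma cutoffE_le_one {X : Type*} [MetricSpace X] (x₀ : X) {R : ℝ} (hR : 0 < R) (x : X) :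
    cutoffE x₀ R x ≤ 1 := by
  have h : 0 ≤ Metric.infDist x (Metric.ball x₀ R) := Metric.infDist_nonneg
  have : 0 ≤ Metric.infDist x (Metric.ball x₀ R) / R := by positivity
  unfold cutoffE
  apply max_le (by norm_num) (by linarith)

lemma cutoffE_eq_one {X : Type*} [MetricSpace X] {x₀ : X} {R : ℝ} (hR : 0 < R) {x : X}
    (hx : x ∈ Metric.ball x₀ R) : cutoffE x₀ R x = 1 := by
  unfold cutoffE
  rw [Metric.infDist_zero_of_mem hx]
  norm_num

lemma one_sub_cutoffE_le {X : Type*} [MetricSpace X] (x₀ : X) {R : ℝ} (hR : 0 < R) (x : X) :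
    1 - cutoffE x₀ R x ≤ Metric.infDist x (Metric.ball x₀ R) / R := by
  have : 0 ≤ Metric.infDist x (Metric.ball x₀ R) / R := by
    have := Metric.infDist_nonneg (s := Metric.ball x₀ R) (x := x); positivity
  unfold cutoffE
  rcases le_max_iff.mpr (Or.inr (le_refl (1 - Metric.infDist x (Metric.ball x₀ R) / R))) with h
  have h2 : 1 - Metric.infDist x (Metric.ball x₀ R) / R ≤ max 0 (1 - Metric.infDist x (Metric.ball x₀ R) / R) := le_max_right _ _
  linarith

lemma cutoffE_lip {X : Type*} [MetricSpace X] (x₀ : X) {R : ℝ} (hR : 0 < R) (x y : X) :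
    |cutoffE x₀ R x - cutoffE x₀ R y| ≤ dist x y / R := by
  have h1 : |Metric.infDist x (Metric.ball x₀ R) - Metric.infDist y (Metric.ball x₀ R)| ≤ dist x y := by
    have := (Metric.lipschitz_infDist_pt (Metric.ball x₀ R)).dist_le_mul x y
    rwa [Real.dist_eq, NNReal.coe_one, one_mul] at this
  have h2 : |(1 - Metric.infDist x (Metric.ball x₀ R) / R) - (1 - Metric.infDist y (Metric.ball x₀ R) / R)| ≤ dist x y / R := by
    rw [show (1 - Metric.infDist x (Metric.ball x₀ R) / R) - (1 - Metric.infDist y (Metric.ball x₀ R) / R)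
        = -((Metric.infDist x (Metric.ball x₀ R) - Metric.infDist y (Metric.ball x₀ R)) / R) by ring,
      abs_neg, abs_div, abs_of_pos hR]
    gcongr
  have h3 := abs_max_sub_max_le_abs (1 - Metric.infDist x (Metric.ball x₀ R) / R)
    (1 - Metric.infDist y (Metric.ball x₀ R) / R) 0
  simp only [cutoffE, max_comm (0 : ℝ)]
  exact h3.trans h2

theorem lipHigson_truncations_very_lipschitz {X : Type*} [MetricSpace X]
    [ProperSpace X] (x₀ : X) (g : X → ℝ) (hgc : Continuous g)
    (hg1 : ∀ x, |g x| ≤ 1) (hg : IsLipHigson g)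
    (R : ℕ → ℝ) (hRpos : ∀ k, 0 < R k)
    (hR : Filter.Tendsto R Filter.atTop Filter.atTop) :
    ∀ L > (0 : ℝ), ∃ k₀, ∀ k ≥ k₀, ∀ x y : X,
      |(1 - cutoffE x₀ (R k) x) * g x - (1 - cutoffE x₀ (R k) y) * g y|
        ≤ L * dist x y := by
  intro L hL
  obtain ⟨A, hA, hAlip⟩ := hg (L / 2) (by positivity)
  obtain ⟨r, hr⟩ := hA.isBounded.subset_closedBall x₀
  set M : ℝ := max (r + 1) (2 / L) with hM
  obtain ⟨k₀, hk₀⟩ := Filter.eventually_atTop.mp (hR.eventually_ge_atTop M)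
  refine ⟨k₀, fun k hk x y => ?_⟩
  have hMk : M ≤ R k := hk₀ k hk
  have hRk : 0 < R k := hRpos k
  have hinv : 1 / R k ≤ L / 2 := by
    rw [div_le_div_iff₀ hRk (by norm_num)]
    have h2 : 2 / L ≤ R k := le_trans (le_max_right _ _) hMk
    rw [div_le_iff₀ hL] at h2
    linarith
  have hball : A ⊆ Metric.ball x₀ (R k) := by
    refine hr.trans fun z hz => ?_
    have : dist z x₀ ≤ r := Metric.mem_closedBall.mp hz
    have : r + 1 ≤ R k := le_trans (le_max_left _ _) hMk
    exact Metric.mem_ball.mpr (by linarith [Metric.mem_closedBall.mp hz])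
  set e := cutoffE x₀ (R k) with he
  -- case helper: x in ball
  have key : ∀ u v : X, u ∈ Metric.ball x₀ (R k) →
      |(1 - e u) * g u - (1 - e v) * g v| ≤ L * dist u v := by
    intro u v hu
    rw [he, cutoffE_eq_one hRk hu]
    simp only [sub_self, zero_mul, zero_sub, abs_neg, abs_mul]
    have h1 : 1 - cutoffE x₀ (R k) v ≤ Metric.infDist v (Metric.ball x₀ (R k)) / R k :=
      one_sub_cutoffE_le x₀ hRk v
    have h2 : Metric.infDist v (Metric.ball x₀ (R k)) ≤ dist v u :=
      Metric.infDist_le_dist_of_mem hu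
    have h3 : 0 ≤ 1 - cutoffE x₀ (R k) v := by
      have := cutoffE_le_one x₀ hRk v; linarith
    have h4 : |1 - cutoffE x₀ (R k) v| * |g v| ≤ dist v u / R k := by
      calc |1 - cutoffE x₀ (R k) v| * |g v| ≤ |1 - cutoffE x₀ (R k) v| * 1 :=
            mul_le_mul_of_nonneg_left (hg1 v) (abs_nonneg _)
        _ = 1 - cutoffE x₀ (R k) v := by rw [mul_one, abs_of_nonneg h3]
        _ ≤ Metric.infDist v (Metric.ball x₀ (R k)) / R k := h1
        _ ≤ dist v u / R k := by gcongr
    calc |1 - cutoffE x₀ (R k) v| * |g v| ≤ dist v u / R k := h4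
      _ = dist u v * (1 / R k) := by rw [dist_comm]; ring
      _ ≤ dist u v * (L / 2) := mul_le_mul_of_nonneg_left hinv dist_nonneg
      _ ≤ L * dist u v := by nlinarith [dist_nonneg (x := u) (y := v), hL]
  by_cases hx : x ∈ Metric.ball x₀ (R k)
  · exact key x y hx
  by_cases hy : y ∈ Metric.ball x₀ (R k)
  · rw [abs_sub_comm, dist_comm]; exact key y x hy
  -- main case: both outside the ball, hence outside A
  have hgxy : |g x - g y| ≤ L / 2 * dist x y :=
    hAlip x y (fun h => hx (hball h)) (fun h => hy (hball h))
  have hex0 : 0 ≤ 1 - e x := by have := cutoffE_le_one x₀ hRk x; rw [he]; linarith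
  have hex1 : 1 - e x ≤ 1 := by have := cutoffE_nonneg x₀ (R k) x; rw [he]; linarith
  have helip : |e x - e y| ≤ dist x y / R k := cutoffE_lip x₀ hRk x y
  have expand : (1 - e x) * g x - (1 - e y) * g y
      = (1 - e x) * (g x - g y) + (e y - e x) * g y := by ring
  calc |(1 - e x) * g x - (1 - e y) * g y|
      ≤ |(1 - e x) * (g x - g y)| + |(e y - e x) * g y| := by rw [expand]; exact abs_add_le _ _
    _ = |1 - e x| * |g x - g y| + |e y - e x| * |g y| := by rw [abs_mul, abs_mul]
    _ ≤ 1 * (L / 2 * dist x y) + (dist x y / R k) * 1 := by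
        refine add_le_add (mul_le_mul (by rw [abs_of_nonneg hex0]; exact hex1) hgxy
          (abs_nonneg _) (by norm_num)) (mul_le_mul ?_ (hg1 y) (abs_nonneg _)
          (div_nonneg dist_nonneg hRk.le))
        rw [abs_sub_comm]; exact helip
    _ = L / 2 * dist x y + dist x y * (1 / R k) := by ring
    _ ≤ L / 2 * dist x y + dist x y * (L / 2) :=
        add_le_add_right (mul_le_mul_of_nonneg_left hinv dist_nonneg) _
    _ = L * dist x y := by ring
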